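/- Let c ∈ (0,1), let m ∈ ℕ with m ≥ 1, and let τ̄ ∈ ℕ with τ̄ ≥ 1. Set ρ_c = 1 − (1−c²)/m and ρ_a = ρ_c^{m/(m+τ̄)}. For a probability distribution P on {0,…,τ̄}, define φ_P(ρ) = ρ − ρ_c − (c²/m)·(Σ_{i=0}^{τ̄} P_i·ρ^{−i} − 1) for ρ > 0, α_P = 1/(1 − φ_P(ρ_a)/φ_P(ρ_c)), and ρ_P = α_P·ρ_a + (1−α_P)·ρ_c. Let P and P' be probability distributions on {0,…,τ̄} with P_0 < 1 and P'_0 < 1. If P first-order stochastically dominates P', i.e., Σ_{j=0}^{i} P_j ≥ Σ_{j=0}^{i} P'_j for every i ∈ {0,…,τ̄}, then ρ_P ≤ ρ_{P'}. -/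

import Mathlib

/-- Abel summation comparison: if `P` dominates `P'` (partial sums of `P` are larger),
the total masses agree, and `f` is monotone on `{0,…,τ}`, then
`∑ P i * f i ≤ ∑ P' i * f i`. -/
lemma abel_dom_mono (τ : ℕ) (P P' : ℕ → ℝ)
    (hsum : ∑ i ∈ Finset.range (τ + 1), P i = ∑ i ∈ Finset.range (τ + 1), P' i)
    (hdom : ∀ i ≤ τ, ∑ j ∈ Finset.range (i + 1), P' j ≤ ∑ j ∈ Finset.range (i + 1), P j)
    (f : ℕ → ℝ) (hf : ∀ i, i < τ → f i ≤ f (i + 1)) :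
    ∑ i ∈ Finset.range (τ + 1), P i * f i ≤ ∑ i ∈ Finset.range (τ + 1), P' i * f i := by
  have h1 := Finset.sum_range_by_parts f P (τ + 1)
  have h2 := Finset.sum_range_by_parts f P' (τ + 1)
  simp only [smul_eq_mul, Nat.add_sub_cancel] at h1 h2
  have key : ∑ i ∈ Finset.range τ, (f (i + 1) - f i) * ∑ j ∈ Finset.range (i + 1), P' j ≤
      ∑ i ∈ Finset.range τ, (f (i + 1) - f i) * ∑ j ∈ Finset.range (i + 1), P j := by
    apply Finset.sum_le_sum
    intro i hi
    have hiτ : i ≤ τ := le_of_lt (Finset.mem_range.1 hi)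
    exact mul_le_mul_of_nonneg_left (hdom i hiτ)
      (sub_nonneg.2 (hf i (Finset.mem_range.1 hi)))
  have e1 : ∑ i ∈ Finset.range (τ + 1), P i * f i
      = ∑ i ∈ Finset.range (τ + 1), f i * P i := by
    apply Finset.sum_congr rfl; intros; ring
  have e2 : ∑ i ∈ Finset.range (τ + 1), P' i * f i
      = ∑ i ∈ Finset.range (τ + 1), f i * P' i := by
    apply Finset.sum_congr rfl; intros; ring
  rw [e1, e2, h1, h2, hsum]
  linarith

set_option maxHeartbeats 1600000 in
/-- Lemma 1 of the paper: if the delay distribution `P` first-order stochastically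
dominates `P'`, then the convergence factor satisfies `ρ_P ≤ ρ_{P'}`. -/
theorem stmt_10 (c : ℝ) (hc : c ∈ Set.Ioo (0:ℝ) 1) (m τ : ℕ) (hm : 1 ≤ m) (hτ : 1 ≤ τ)
    (P P' : ℕ → ℝ)
    (hP : ∀ i ≤ τ, 0 ≤ P i) (hP' : ∀ i ≤ τ, 0 ≤ P' i)
    (hPsum : ∑ i ∈ Finset.range (τ + 1), P i = 1)
    (hP'sum : ∑ i ∈ Finset.range (τ + 1), P' i = 1)
    (hP0 : P 0 < 1) (hP'0 : P' 0 < 1)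
    (ρc ρa : ℝ) (hρc : ρc = 1 - (1 - c ^ 2) / (m : ℝ))
    (hρa : ρa = ρc ^ ((m : ℝ) / ((m : ℝ) + (τ : ℝ))))
    (φ φ' : ℝ → ℝ)
    (hφ : ∀ ρ, φ ρ = ρ - ρc -
      (c ^ 2 / (m : ℝ)) * ((∑ i ∈ Finset.range (τ + 1), P i * ρ ^ (-(i : ℝ))) - 1))
    (hφ' : ∀ ρ, φ' ρ = ρ - ρc -
      (c ^ 2 / (m : ℝ)) * ((∑ i ∈ Finset.range (τ + 1), P' i * ρ ^ (-(i : ℝ))) - 1))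
    (αP αP' : ℝ) (hαP : αP = 1 / (1 - φ ρa / φ ρc)) (hαP' : αP' = 1 / (1 - φ' ρa / φ' ρc))
    (ρP ρP' : ℝ) (hρP : ρP = αP * ρa + (1 - αP) * ρc)
    (hρP' : ρP' = αP' * ρa + (1 - αP') * ρc)
    (hdom : ∀ i ≤ τ, ∑ j ∈ Finset.range (i + 1), P' j ≤ ∑ j ∈ Finset.range (i + 1), P j) :
    ρP ≤ ρP' := by
  obtain ⟨hc0, hc1⟩ := hc
  have hmR : (1:ℝ) ≤ (m:ℝ) := by exact_mod_cast hm
  have hmpos : (0:ℝ) < (m:ℝ) := by linarith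
  have hτR : (1:ℝ) ≤ (τ:ℝ) := by exact_mod_cast hτ
  have hcsq0 : 0 < c ^ 2 := by positivity
  have hcsq1 : c ^ 2 < 1 := pow_lt_one₀ hc0.le hc1 (by norm_num)
  -- basic facts about ρc
  have hdiv : (1 - c ^ 2) / (m:ℝ) ≤ 1 - c ^ 2 := div_le_self (by linarith) hmR
  have hxc : c ^ 2 ≤ ρc := by rw [hρc]; linarith
  have hx0 : 0 < ρc := lt_of_lt_of_le hcsq0 hxc
  have hmτpos : (0:ℝ) < (m:ℝ) + (τ:ℝ) := by linarith
  have hx1 : ρc < 1 := by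
    rw [hρc]
    have : 0 < (1 - c ^ 2) / (m:ℝ) := div_pos (by linarith) hmpos
    linarith
  -- the exponent s
  set s : ℝ := (m:ℝ) / ((m:ℝ) + (τ:ℝ)) with hs
  have hs0 : 0 < s := div_pos hmpos hmτpos
  have hs1 : s < 1 := by rw [hs, div_lt_one hmτpos]; linarith
  -- basic facts about ρa
  have ha0 : 0 < ρa := by rw [hρa]; exact Real.rpow_pos_of_pos hx0 _
  have ha1 : ρa < 1 := by rw [hρa]; exact Real.rpow_lt_one (le_of_lt hx0) hx1 hs0
  have hca : ρc < ρa := by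
    have := Real.rpow_lt_rpow_of_exponent_gt hx0 hx1 hs1
    rw [Real.rpow_one] at this
    rw [hρa]; exact this
  have hcm : 0 < c ^ 2 / (m:ℝ) := by positivity
  -- Fact B : ∑ Q i * ρc^(-i) > 1 for any distribution Q with Q 0 < 1
  have factB : ∀ Q : ℕ → ℝ, (∀ i ≤ τ, 0 ≤ Q i) →
      (∑ i ∈ Finset.range (τ + 1), Q i = 1) → Q 0 < 1 →
      1 < ∑ i ∈ Finset.range (τ + 1), Q i * ρc ^ (-(i : ℝ)) := by
    intro Q hQ hQsum hQ0
    have hsum' : ∑ i ∈ Finset.range τ, Q (i + 1) + Q 0 = 1 := by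
      rw [← Finset.sum_range_succ']; exact hQsum
    have hpos : 0 < ∑ i ∈ Finset.range τ, Q (i + 1) := by linarith
    obtain ⟨i₀, hi₀, hQi₀⟩ : ∃ i ∈ Finset.range τ, 0 < Q (i + 1) := by
      by_contra h
      push_neg at h
      have : ∑ i ∈ Finset.range τ, Q (i + 1) ≤ 0 :=
        Finset.sum_nonpos fun i hi => h i hi
      linarith
    calc 1 = ∑ i ∈ Finset.range (τ + 1), Q i := hQsum.symm
    _ < ∑ i ∈ Finset.range (τ + 1), Q i * ρc ^ (-(i : ℝ)) := by
        apply Finset.sum_lt_sum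
        · intro i hi
          have h1 : 1 ≤ ρc ^ (-(i : ℝ)) :=
            Real.one_le_rpow_of_pos_of_le_one_of_nonpos hx0 hx1.le
              (neg_nonpos.2 (Nat.cast_nonneg i))
          exact le_mul_of_one_le_right (hQ i (Nat.lt_succ_iff.1 (Finset.mem_range.1 hi))) h1
        · have hi₀' := Finset.mem_range.1 hi₀
          refine ⟨i₀ + 1, Finset.mem_range.2 (by omega), ?_⟩
          have h1 : 1 < ρc ^ (-((i₀ + 1 : ℕ) : ℝ)) := by
            apply Real.one_lt_rpow_of_pos_of_lt_one_of_neg hx0 hx1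
            push_cast
            linarith [Nat.cast_nonneg (α := ℝ) i₀]
          exact (lt_mul_iff_one_lt_right hQi₀).2 h1
  have hBP := factB P hP hPsum hP0
  have hBP' := factB P' hP' hP'sum hP'0
  -- φ(ρc) < 0 and φ'(ρc) < 0
  have hφc : φ ρc < 0 := by
    rw [hφ]
    have := mul_pos hcm (sub_pos.2 hBP)
    linarith
  have hφ'c : φ' ρc < 0 := by
    rw [hφ']
    have := mul_pos hcm (sub_pos.2 hBP')
    linarith
  -- Fact A : monotone comparison of the sums at any ρ ∈ (0,1]
  have factA : ∀ ρ : ℝ, 0 < ρ → ρ ≤ 1 →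
      ∑ i ∈ Finset.range (τ + 1), P i * ρ ^ (-(i : ℝ)) ≤
        ∑ i ∈ Finset.range (τ + 1), P' i * ρ ^ (-(i : ℝ)) := by
    intro ρ h0 h1
    apply abel_dom_mono τ P P' (by rw [hPsum, hP'sum]) hdom
    intro i _
    apply Real.rpow_le_rpow_of_exponent_ge h0 h1
    push_cast; linarith
  have hAc : φ' ρc ≤ φ ρc := by
    rw [hφ, hφ']
    have h := factA ρc hx0 hx1.le
    linarith [mul_le_mul_of_nonneg_left h hcm.le]
  have hAa : φ' ρa ≤ φ ρa := by
    rw [hφ, hφ']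
    have h := factA ρa ha0 ha1.le
    linarith [mul_le_mul_of_nonneg_left h hcm.le]
  -- Fact C : φ'(ρa) ≥ 0
  set q : ℝ := ρc ^ (1 - s) with hqdef
  have hq1 : q < 1 := Real.rpow_lt_one hx0.le hx1 (by linarith)
  have hq0 : 0 < q := Real.rpow_pos_of_pos hx0 _
  have hqa : ρa * q = ρc := by
    rw [hρa, hqdef, ← Real.rpow_add hx0]
    norm_num
  have hexp : (1 - s) * (m:ℝ) = s * (τ:ℝ) := by
    rw [hs]; field_simp; ring
  have hqm : q ^ (m:ℕ) = ρc ^ (s * (τ:ℝ)) := by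
    rw [← Real.rpow_natCast q m, hqdef, ← Real.rpow_mul hx0.le, hexp]
  have hqmpos : 0 < q ^ (m:ℕ) := pow_pos hq0 m
  have hqm1 : q ^ (m:ℕ) < 1 := pow_lt_one₀ hq0.le hq1 (by omega)
  have haτ : ρa ^ (-(τ:ℝ)) = (q ^ (m:ℕ))⁻¹ := by
    rw [hρa, ← Real.rpow_mul hx0.le, hqm, ← Real.rpow_neg hx0.le]
    ring_nf
  -- Bernoulli : 1 - q^m ≤ m(1-q)
  have hbern1 : 1 + (m:ℝ) * (q - 1) ≤ q ^ (m:ℕ) := by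
    have := one_add_mul_le_pow (a := q - 1) (by linarith) m
    simpa using this
  -- Bernoulli : c² ≤ ρc^m
  have hbern2 : c ^ 2 ≤ ρc ^ (m:ℕ) := by
    have h := one_add_mul_le_pow (a := ρc - 1) (by linarith) m
    have hc2 : c ^ 2 = 1 + (m:ℝ) * (ρc - 1) := by
      rw [hρc]; field_simp; ring
    rw [hc2]
    simpa using h
  -- c² ≤ ρa * q^m
  have hkey : c ^ 2 ≤ ρa * q ^ (m:ℕ) := by
    have h1 : ρa * q ^ (m:ℕ) = ρc ^ (s * (1 + (τ:ℝ))) := by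
      rw [hρa, hqm, ← Real.rpow_add hx0]
      congr 1
      ring
    have h2 : s * (1 + (τ:ℝ)) ≤ (m:ℝ) := by
      rw [hs, div_mul_eq_mul_div, div_le_iff₀ hmτpos]
      exact mul_le_mul_of_nonneg_left (by linarith) hmpos.le
    have h3 : ρc ^ ((m:ℝ)) ≤ ρc ^ (s * (1 + (τ:ℝ))) :=
      Real.rpow_le_rpow_of_exponent_ge hx0 hx1.le h2
    rw [h1]
    calc c ^ 2 ≤ ρc ^ (m:ℕ) := hbern2
    _ = ρc ^ ((m:ℝ)) := (Real.rpow_natCast ρc m).symm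
    _ ≤ _ := h3
  -- core inequality : (c²/m)(ρa^(-τ) - 1) ≤ ρa - ρc
  have hCore : c ^ 2 / (m:ℝ) * (ρa ^ (-(τ:ℝ)) - 1) ≤ ρa - ρc := by
    rw [haτ, ← hqa]
    rw [div_mul_eq_mul_div, div_le_iff₀ hmpos]
    have hinv : (q ^ (m:ℕ))⁻¹ * q ^ (m:ℕ) = 1 := inv_mul_cancel₀ hqmpos.ne'
    have e1 : c ^ 2 * (1 - q ^ (m:ℕ)) ≤ (ρa * q ^ (m:ℕ)) * (1 - q ^ (m:ℕ)) :=
      mul_le_mul_of_nonneg_right hkey (by linarith)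
    have e2 : (ρa * q ^ (m:ℕ)) * (1 - q ^ (m:ℕ)) ≤
        (ρa * q ^ (m:ℕ)) * ((m:ℝ) * (1 - q)) := by
      apply mul_le_mul_of_nonneg_left (by linarith) (by positivity)
    -- goal : c^2 * ((q^m)⁻¹ - 1) ≤ (ρa - ρa*q) * m
    have e3 : (c ^ 2 * ((q ^ (m:ℕ))⁻¹ - 1)) * q ^ (m:ℕ) = c ^ 2 * (1 - q ^ (m:ℕ)) := by
      field_simp
    have e4 : (c ^ 2 * ((q ^ (m:ℕ))⁻¹ - 1)) * q ^ (m:ℕ) ≤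
        ((ρa - ρa * q) * (m:ℝ)) * q ^ (m:ℕ) := by
      rw [e3]
      have e5 : ((ρa - ρa * q) * (m:ℝ)) * q ^ (m:ℕ)
          = (ρa * q ^ (m:ℕ)) * ((m:ℝ) * (1 - q)) := by ring
      rw [e5]
      linarith
    exact le_of_mul_le_mul_right e4 hqmpos
  -- φ'(ρa) ≥ 0 and φ(ρa) ≥ 0
  have hφ'a : 0 ≤ φ' ρa := by
    rw [hφ']
    have hsumle : ∑ i ∈ Finset.range (τ + 1), P' i * ρa ^ (-(i : ℝ)) ≤ ρa ^ (-(τ:ℝ)) := by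
      calc ∑ i ∈ Finset.range (τ + 1), P' i * ρa ^ (-(i : ℝ))
          ≤ ∑ i ∈ Finset.range (τ + 1), P' i * ρa ^ (-(τ:ℝ)) := by
            apply Finset.sum_le_sum
            intro i hi
            have hiτ : i ≤ τ := Nat.lt_succ_iff.1 (Finset.mem_range.1 hi)
            apply mul_le_mul_of_nonneg_left _ (hP' i hiτ)
            apply Real.rpow_le_rpow_of_exponent_ge ha0 ha1.le
            have : (i:ℝ) ≤ (τ:ℝ) := by exact_mod_cast hiτ
            linarith
      _ = ρa ^ (-(τ:ℝ)) := by rw [← Finset.sum_mul, hP'sum, one_mul]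
    linarith [mul_le_mul_of_nonneg_left (sub_le_sub_right hsumle 1) hcm.le, hCore]
  have hφa : 0 ≤ φ ρa := le_trans hφ'a hAa
  -- final algebra with α
  have hApos : 0 < -φ ρc := by linarith
  have hA'pos : 0 < -φ' ρc := by linarith
  have hdenP : 0 < -φ ρc + φ ρa := by linarith
  have hdenP' : 0 < -φ' ρc + φ' ρa := by linarith
  have hαPeq : αP = (-φ ρc) / (-φ ρc + φ ρa) := by
    have h1 : 1 - φ ρa / φ ρc = (-φ ρc + φ ρa) / (-φ ρc) := by
      field_simp [hφc.ne]
      ring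
    rw [hαP, h1, one_div, inv_div]
  have hαP'eq : αP' = (-φ' ρc) / (-φ' ρc + φ' ρa) := by
    have h1 : 1 - φ' ρa / φ' ρc = (-φ' ρc + φ' ρa) / (-φ' ρc) := by
      field_simp [hφ'c.ne]
      ring
    rw [hαP', h1, one_div, inv_div]
  have hαle : αP ≤ αP' := by
    rw [hαPeq, hαP'eq, div_le_div_iff₀ hdenP hdenP']
    have k1 : (-φ ρc) * φ' ρa ≤ (-φ' ρc) * φ' ρa :=
      mul_le_mul_of_nonneg_right (by linarith) hφ'a
    have k2 : (-φ' ρc) * φ ρa ≥ (-φ' ρc) * φ' ρa :=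
      mul_le_mul_of_nonneg_left hAa (by linarith)
    have expand1 : -φ ρc * (-φ' ρc + φ' ρa) = φ ρc * φ' ρc + (-φ ρc) * φ' ρa := by ring
    have expand2 : -φ' ρc * (-φ ρc + φ ρa) = φ ρc * φ' ρc + (-φ' ρc) * φ ρa := by ring
    rw [expand1, expand2]
    linarith
  have k := mul_le_mul_of_nonneg_right hαle (le_of_lt (sub_pos.2 hca))
  have e1 : ρP = ρc + αP * (ρa - ρc) := by rw [hρP]; ring
  have e2 : ρP' = ρc + αP' * (ρa - ρc) := by rw [hρP']; ring
  rw [e1, e2]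
  linarith
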